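/- (Test-count bound for binary-splitting group testing: O(k log n)) Let n ≥ 1 be a natural number and let D ⊆ Finset.range n be a finset. Then the number of pairs (i, j) with i ∈ Finset.range (Nat.clog 2 n + 1) and j ∈ Finset.range n such that the dyadic interval Finset.Ico (j * 2^i) ((j + 1) * 2^i) has nonempty intersection with D is at most D.card * (Nat.clog 2 n + 1). -/
import Mathlib

/-- **Test-count bound for binary-splitting group testing (`O(k log n)`).** For `n ≥ 1` and
`D ⊆ range n`, the number of pairs `(i, j)` with `i < Nat.clog 2 n + 1` and `j < n` whose
dyadic interval `Ico (j * 2^i) ((j+1) * 2^i)` meets `D` is at most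
`D.card * (Nat.clog 2 n + 1)`. -/
theorem dyadic_intervals_meeting_card_le (n : ℕ) (hn : 1 ≤ n)
    (D : Finset ℕ) (hD : D ⊆ Finset.range n) :
    ((Finset.range (Nat.clog 2 n + 1) ×ˢ Finset.range n).filter fun p =>
        (Finset.Ico (p.2 * 2 ^ p.1) ((p.2 + 1) * 2 ^ p.1) ∩ D).Nonempty).card ≤
      D.card * (Nat.clog 2 n + 1) := by
  have hsub : ((Finset.range (Nat.clog 2 n + 1) ×ˢ Finset.range n).filter fun p =>
        (Finset.Ico (p.2 * 2 ^ p.1) ((p.2 + 1) * 2 ^ p.1) ∩ D).Nonempty) ⊆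
      (Finset.range (Nat.clog 2 n + 1) ×ˢ D).image
        (fun q : ℕ × ℕ => (q.1, q.2 / 2 ^ q.1)) := by
    intro p hp
    simp only [Finset.mem_filter, Finset.mem_product] at hp
    obtain ⟨⟨hi, hj⟩, d, hd⟩ := hp
    simp only [Finset.mem_inter, Finset.mem_Ico] at hd
    obtain ⟨⟨hd1, hd2⟩, hdD⟩ := hd
    refine Finset.mem_image.mpr ⟨(p.1, d), ?_, ?_⟩
    · simp [Finset.mem_product, hi, hdD]
    · have : d / 2 ^ p.1 = p.2 := Nat.div_eq_of_lt_le hd1 hd2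
      simp [this]
  calc _ ≤ ((Finset.range (Nat.clog 2 n + 1) ×ˢ D).image
        (fun q : ℕ × ℕ => (q.1, q.2 / 2 ^ q.1))).card := Finset.card_le_card hsub
    _ ≤ (Finset.range (Nat.clog 2 n + 1) ×ˢ D).card := Finset.card_image_le
    _ = D.card * (Nat.clog 2 n + 1) := by
        simp [Finset.card_product, Nat.mul_comm]
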